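/- Let K be a field of characteristic 0, p an odd prime, a,b,c,d indeterminates, Δ = a^p d^p − b^p c^p, and v, w as in the split symmetric case: v = b^p d^p(2^p(a^p d^p+b^p c^p)−2(ad+bc)^p)/Δ^2, w = a^p c^p(2^p(a^p d^p+b^p c^p)−2(ad+bc)^p)/Δ^2. Then v ≠ 0 and w ≠ 0 in K(a,b,c,d), and vw is a square in K(a,b,c,d) times a^p b^p c^p d^p; in particular vw is not a square in K(a,b,c,d), and 1 is not an eigenvalue of the matrix ((u,v),(w,u)) for the corresponding u. -/

import Mathlib

set_option synthInstance.maxHeartbeats 1000000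
set_option maxHeartbeats 1000000

open MvPolynomial

noncomputable section

/-- The rational function field `E = K(a,b,c,d)`, realized as the fraction field of the
polynomial ring in the four indeterminates `a, b, c, d`. -/
abbrev E (K : Type) [Field K] := FractionRing (MvPolynomial (Fin 4) K)

/-- The transcendental generator `a` of `E = K(a,b,c,d)`. -/
def va (K : Type) [Field K] : E K := algebraMap (MvPolynomial (Fin 4) K) (E K) (X 0)
/-- The transcendental generator `b` of `E = K(a,b,c,d)`. -/
def vb (K : Type) [Field K] : E K := algebraMap (MvPolynomial (Fin 4) K) (E K) (X 1)
/-- The transcendental generator `c` of `E = K(a,b,c,d)`. -/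
def vc (K : Type) [Field K] : E K := algebraMap (MvPolynomial (Fin 4) K) (E K) (X 2)
/-- The transcendental generator `d` of `E = K(a,b,c,d)`. -/
def vd (K : Type) [Field K] : E K := algebraMap (MvPolynomial (Fin 4) K) (E K) (X 3)

/-- The polynomial `abcd` is not a square in `K[a,b,c,d]` (degree argument in `a`). -/
lemma aux_not_sq_poly (K : Type) [Field K] (y : MvPolynomial (Fin 4) K) :
    y * y ≠ X 0 * X 1 * X 2 * X 3 := by
  intro h
  have hy : y ≠ 0 := by
    intro h0
    rw [h0, zero_mul] at h
    exact (by simp [X_ne_zero] : (X 0 * X 1 * X 2 * X 3 : MvPolynomial (Fin 4) K) ≠ 0) h.symm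
  have := congrArg (MvPolynomial.finSuccEquiv K 3) h
  rw [map_mul, map_mul, map_mul, map_mul] at this
  have h1 : MvPolynomial.finSuccEquiv K 3 (X 1 : MvPolynomial (Fin 4) K) = Polynomial.C (X 0) := by
    rw [show (1 : Fin 4) = Fin.succ 0 from rfl, finSuccEquiv_X_succ]
  have h2 : MvPolynomial.finSuccEquiv K 3 (X 2 : MvPolynomial (Fin 4) K) = Polynomial.C (X 1) := by
    rw [show (2 : Fin 4) = Fin.succ 1 from rfl, finSuccEquiv_X_succ]
  have h3 : MvPolynomial.finSuccEquiv K 3 (X 3 : MvPolynomial (Fin 4) K) = Polynomial.C (X 2) := by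
    rw [show (3 : Fin 4) = Fin.succ 2 from rfl, finSuccEquiv_X_succ]
  rw [finSuccEquiv_X_zero, h1, h2, h3] at this
  have hq : MvPolynomial.finSuccEquiv K 3 y ≠ 0 := fun h0 => hy <| by
    apply (MvPolynomial.finSuccEquiv K 3).injective
    rw [h0, map_zero]
  have hdeg := congrArg Polynomial.natDegree this
  rw [Polynomial.natDegree_mul hq hq] at hdeg
  have hC : (Polynomial.C ((X 0 : MvPolynomial (Fin 3) K)) * Polynomial.C (X 1)
      * Polynomial.C (X 2)) ≠ 0 := by
    rw [← Polynomial.C_mul, ← Polynomial.C_mul]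
    simp [X_ne_zero]
  have hone : (Polynomial.X * Polynomial.C (X 0 : MvPolynomial (Fin 3) K) * Polynomial.C (X 1)
      * Polynomial.C (X 2)).natDegree = 1 := by
    rw [mul_assoc, mul_assoc, Polynomial.natDegree_mul Polynomial.X_ne_zero (by
      rw [← mul_assoc]; exact hC)]
    rw [← mul_assoc]
    rw [Polynomial.natDegree_X]
    rw [← Polynomial.C_mul, ← Polynomial.C_mul, Polynomial.natDegree_C]
  rw [hone] at hdeg
  omega

/-- `abcd` is not a square in `K(a,b,c,d)` (a polynomial ring is integrally closed). -/
lemma aux_not_sq (K : Type) [Field K] : ¬ IsSquare (va K * vb K * vc K * vd K) := by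
  rintro ⟨s, hs⟩
  have hprod : va K * vb K * vc K * vd K
      = algebraMap (MvPolynomial (Fin 4) K) (E K) (X 0 * X 1 * X 2 * X 3) := by
    simp [va, vb, vc, vd, map_mul]
  have hint : IsIntegral (MvPolynomial (Fin 4) K) s := by
    refine ⟨Polynomial.X ^ 2 - Polynomial.C (X 0 * X 1 * X 2 * X 3), ?_, ?_⟩
    · exact Polynomial.monic_X_pow_sub_C _ (by norm_num)
    · simp only [Polynomial.eval₂_sub, Polynomial.eval₂_pow, Polynomial.eval₂_X,
        Polynomial.eval₂_C]
      rw [← hprod, hs]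
      ring
  obtain ⟨y, hy⟩ := IsIntegrallyClosed.isIntegral_iff.mp hint
  apply aux_not_sq_poly K y
  apply IsFractionRing.injective (MvPolynomial (Fin 4) K) (E K)
  rw [map_mul, hy, ← hs, hprod]

/-- With `u, v, w` as in the split symmetric case over `E = K(a,b,c,d)` (`K` of
characteristic zero, `p` an odd prime): `v ≠ 0`, `w ≠ 0`, `vw` is a square in `E` times
`a^p b^p c^p d^p`; in particular `vw` is not a square in `E`, and `1` is not an eigenvalue
of the matrix `((u,v),(w,u))` (i.e. `1` is not a root of its characteristic polynomial). -/
theorem stmt18 (K : Type) [Field K] [CharZero K] (p : ℕ) (hp : p.Prime) (hodd : Odd p)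
    (a b c d : E K) (ha : a = va K) (hb : b = vb K) (hc : c = vc K) (hd : d = vd K)
    (u v w : E K)
    (hu : u = ((a ^ p * d ^ p + b ^ p * c ^ p) * (a * d + b * c) ^ p
          - 2 ^ (p + 1) * a ^ p * b ^ p * c ^ p * d ^ p)
        / (a ^ p * d ^ p - b ^ p * c ^ p) ^ 2)
    (hv : v = b ^ p * d ^ p * (2 ^ p * (a ^ p * d ^ p + b ^ p * c ^ p)
          - 2 * (a * d + b * c) ^ p) / (a ^ p * d ^ p - b ^ p * c ^ p) ^ 2)
    (hw : w = a ^ p * c ^ p * (2 ^ p * (a ^ p * d ^ p + b ^ p * c ^ p)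
          - 2 * (a * d + b * c) ^ p) / (a ^ p * d ^ p - b ^ p * c ^ p) ^ 2) :
    v ≠ 0 ∧ w ≠ 0 ∧
    (∃ s : E K, v * w = s ^ 2 * (a ^ p * b ^ p * c ^ p * d ^ p)) ∧
    ¬ IsSquare (v * w) ∧
    ¬ (Matrix.charpoly (!![u, v; w, u] : Matrix (Fin 2) (Fin 2) (E K))).IsRoot 1 := by
  set R := MvPolynomial (Fin 4) K
  have hinj := IsFractionRing.injective R (E K)
  have hmap : ∀ q : R, algebraMap R (E K) q = 0 → q = 0 := fun q hq => hinj (by rwa [map_zero])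
  -- nonvanishing of the generators
  have ha0 : a ≠ 0 := by
    rw [ha, va]; exact fun h => X_ne_zero (R := K) (0 : Fin 4) (hmap _ h)
  have hb0 : b ≠ 0 := by
    rw [hb, vb]; exact fun h => X_ne_zero (R := K) (1 : Fin 4) (hmap _ h)
  have hc0 : c ≠ 0 := by
    rw [hc, vc]; exact fun h => X_ne_zero (R := K) (2 : Fin 4) (hmap _ h)
  have hd0 : d ≠ 0 := by
    rw [hd, vd]; exact fun h => X_ne_zero (R := K) (3 : Fin 4) (hmap _ h)
  -- the denominator Δ is nonzero
  have hΔpoly : ((X 0) ^ p * (X 3) ^ p - (X 1) ^ p * (X 2) ^ p : R) ≠ 0 := by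
    intro h
    have := congrArg (MvPolynomial.eval (![1, 0, 0, 1] : Fin 4 → K)) h
    simp [zero_pow hp.ne_zero] at this
  have hΔ : a ^ p * d ^ p - b ^ p * c ^ p ≠ 0 := by
    rw [ha, hb, hc, hd, va, vb, vc, vd]
    rw [← map_pow, ← map_pow, ← map_pow, ← map_pow, ← map_mul, ← map_mul, ← map_sub]
    exact fun h => hΔpoly (hmap _ h)
  -- the numerator factor T is nonzero
  have hTpoly : (2 ^ p * ((X 0) ^ p * (X 3) ^ p + (X 1) ^ p * (X 2) ^ p)
      - 2 * (X 0 * X 3 + X 1 * X 2) ^ p : R) ≠ 0 := by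
    intro h
    have h' := congrArg (MvPolynomial.eval (![1, 0, 0, 1] : Fin 4 → K)) h
    simp [zero_pow hp.ne_zero] at h'
    have h2 : ((2 ^ p : ℕ) : K) = ((2 : ℕ) : K) := by push_cast; linear_combination h'
    have h3 := Nat.cast_inj (R := K) |>.mp h2
    have hge : 2 ^ 2 ≤ 2 ^ p := Nat.pow_le_pow_right (by norm_num) hp.two_le
    omega
  have h2E : (2 : E K) = algebraMap R (E K) 2 := (map_ofNat _ 2).symm
  have hTeq : 2 ^ p * (a ^ p * d ^ p + b ^ p * c ^ p) - 2 * (a * d + b * c) ^ p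
      = algebraMap R (E K) (2 ^ p * ((X 0) ^ p * (X 3) ^ p + (X 1) ^ p * (X 2) ^ p)
        - 2 * (X 0 * X 3 + X 1 * X 2) ^ p) := by
    rw [ha, hb, hc, hd, va, vb, vc, vd, h2E]
    simp only [← map_pow, ← map_mul, ← map_add, ← map_sub]
    rw [← map_mul, ← map_mul, ← map_sub]
  have hT : 2 ^ p * (a ^ p * d ^ p + b ^ p * c ^ p) - 2 * (a * d + b * c) ^ p ≠ 0 := by
    rw [hTeq]
    exact fun h => hTpoly (hmap _ h)
  have hΔ2 : (a ^ p * d ^ p - b ^ p * c ^ p) ^ 2 ≠ 0 := pow_ne_zero _ hΔ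
  have hv0 : v ≠ 0 := by
    rw [hv]
    exact div_ne_zero (mul_ne_zero (mul_ne_zero (pow_ne_zero _ hb0) (pow_ne_zero _ hd0)) hT) hΔ2
  have hw0 : w ≠ 0 := by
    rw [hw]
    exact div_ne_zero (mul_ne_zero (mul_ne_zero (pow_ne_zero _ ha0) (pow_ne_zero _ hc0)) hT) hΔ2
  -- the square decomposition
  set s : E K := (2 ^ p * (a ^ p * d ^ p + b ^ p * c ^ p) - 2 * (a * d + b * c) ^ p)
      / (a ^ p * d ^ p - b ^ p * c ^ p) ^ 2 with hs
  have hsq : v * w = s ^ 2 * (a ^ p * b ^ p * c ^ p * d ^ p) := by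
    rw [hv, hw, hs]
    field_simp
  have hs0 : s ≠ 0 := div_ne_zero hT hΔ2
  -- `vw` is not a square
  have habcd0 : a * b * c * d ≠ 0 :=
    mul_ne_zero (mul_ne_zero (mul_ne_zero ha0 hb0) hc0) hd0
  have hnotsq : ¬ IsSquare (v * w) := by
    rintro ⟨t, ht⟩
    obtain ⟨k, hk⟩ := hodd
    apply aux_not_sq K
    rw [← ha, ← hb, ← hc, ← hd]
    have key : t * t = s ^ 2 * (a * b * c * d) ^ p := by
      rw [← ht, hsq]; ring
    rw [hk] at key
    have hpow : (a * b * c * d) ^ k ≠ 0 := pow_ne_zero _ habcd0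
    refine ⟨t / (s * (a * b * c * d) ^ k), ?_⟩
    rw [div_mul_div_comm,
      eq_comm, div_eq_iff (mul_ne_zero (mul_ne_zero hs0 hpow) (mul_ne_zero hs0 hpow)), key,
      pow_add, pow_mul]
    ring
  refine ⟨hv0, hw0, ⟨s, hsq⟩, hnotsq, ?_⟩
  intro hroot
  apply hnotsq
  refine ⟨1 - u, ?_⟩
  simp [Matrix.charpoly, Matrix.det_fin_two, Matrix.charmatrix_apply, Polynomial.IsRoot,
    Matrix.diagonal] at hroot
  linear_combination -hroot
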